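/- Special soundness of the rerandomization-decryption Σ-protocol: given two accepting transcripts with the same commitments $(T_1,T_2,T_3)$ and distinct challenges $c_1 \neq c_2$, with responses $(r_1,r_2,r_3)$ and $(r_1',r_2',r_3')$ satisfying the verification equations $A^{r_1} g^{r_2} = \alpha^{c} T_1$, $B^{r_1} y^{r_2} \alpha^{r_3} = \beta^{c} T_2$, $g^{r_3} = y_i^{-c} T_3$ for the respective challenges, one can compute a witness: setting $r = (r_1 - r_1')/(c_1-c_2)$, $\sigma = (r_2 - r_2')/(r(c_1-c_2))$ (assuming $r \neq 0$), and $x_i = -(r_3 - r_3')/(c_1-c_2)$, it holds that $g^{x_i} = y_i$, $\alpha = (A g^{\sigma})^r$, and $\beta = (B y^{\sigma})^r \alpha^{-x_i}$. -/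
import Mathlib


/-- Power of a group element by an exponent in `ZMod q`. -/
def gp {G : Type*} [Monoid G] {q : ℕ} [NeZero q] (g : G) (a : ZMod q) : G := g ^ a.val

section Aux

variable {G : Type*} [CommGroup G] {q : ℕ} [Fact q.Prime] (hq : ∀ a : G, a ^ q = 1)
include hq

private lemma gp_pow_mod (a : G) (n : ℕ) : a ^ n = a ^ (n % q) := by
  conv_lhs => rw [← Nat.div_add_mod n q]
  rw [pow_add, pow_mul, hq, one_pow, one_mul]

private lemma gp_add (a : G) (x y : ZMod q) : gp a (x + y) = gp a x * gp a y := by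
  unfold gp
  rw [← pow_add, ZMod.val_add, ← gp_pow_mod hq]

private lemma gp_zero (a : G) : gp a (0 : ZMod q) = 1 := by
  simp [gp]

private lemma gp_one (a : G) : gp a (1 : ZMod q) = a := by
  haveI : Fact (1 < q) := ⟨(Fact.out : q.Prime).one_lt⟩
  simp [gp, ZMod.val_one]

private lemma gp_neg (a : G) (x : ZMod q) : gp a (-x) = (gp a x)⁻¹ := by
  have h : gp a x * gp a (-x) = 1 := by
    rw [← gp_add hq, add_neg_cancel, gp_zero hq]
  exact (inv_eq_of_mul_eq_one_right h).symm

private lemma gp_sub (a : G) (x y : ZMod q) : gp a (x - y) = gp a x / gp a y := by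
  rw [sub_eq_add_neg, gp_add hq, gp_neg hq, div_eq_mul_inv]

private lemma gp_mul (a : G) (x y : ZMod q) : gp a (x * y) = gp (gp a x) y := by
  unfold gp
  rw [← pow_mul, ZMod.val_mul, ← gp_pow_mod hq]

private lemma mul_gp (a b : G) (x : ZMod q) : gp (a * b) x = gp a x * gp b x :=
  mul_pow a b _

private lemma gp_cancel {a b : G} {d : ZMod q} (hd : d ≠ 0)
    (h : gp a d = gp b d) : a = b := by
  have h2 : gp (gp a d) d⁻¹ = gp (gp b d) d⁻¹ := by rw [h]
  rwa [← gp_mul hq, ← gp_mul hq, mul_inv_cancel₀ hd, gp_one hq, gp_one hq] at h2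

end Aux

/-- Special soundness of the rerandomization-decryption Σ-protocol: from two
accepting transcripts with the same commitments and distinct challenges one can
compute a witness `(r, σ, xᵢ)`. -/
theorem rrd_sigma_special_soundness {G : Type*} [CommGroup G] {q : ℕ} [Fact q.Prime]
    (hq : ∀ a : G, a ^ q = 1)
    (g y yi A B α β T₁ T₂ T₃ : G)
    (c₁ c₂ r₁ r₂ r₃ r₁' r₂' r₃' : ZMod q)
    (hc : c₁ ≠ c₂)
    (h₁ : gp A r₁ * gp g r₂ = gp α c₁ * T₁)
    (h₂ : gp B r₁ * gp y r₂ * gp α r₃ = gp β c₁ * T₂)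
    (h₃ : gp g r₃ = gp yi (-c₁) * T₃)
    (h₁' : gp A r₁' * gp g r₂' = gp α c₂ * T₁)
    (h₂' : gp B r₁' * gp y r₂' * gp α r₃' = gp β c₂ * T₂)
    (h₃' : gp g r₃' = gp yi (-c₂) * T₃)
    (r σ xi : ZMod q)
    (hr : r = (r₁ - r₁') / (c₁ - c₂))
    (hrne : r ≠ 0)
    (hσ : σ = (r₂ - r₂') / (r * (c₁ - c₂)))
    (hxi : xi = -((r₃ - r₃') / (c₁ - c₂))) :
    gp g xi = yi ∧ α = gp (A * gp g σ) r ∧ β = gp (B * gp y σ) r * (gp α xi)⁻¹ := by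
  set d := c₁ - c₂ with hd
  have hdne : d ≠ 0 := sub_ne_zero.mpr hc
  have hrd : r * d = r₁ - r₁' := by
    rw [hr]; field_simp
  have hσrd : σ * (r * d) = r₂ - r₂' := by
    rw [hσ]; field_simp
  have hxid : (-xi) * d = r₃ - r₃' := by
    rw [hxi]; field_simp
  -- combined verification equations
  have e1 : gp A (r₁ - r₁') * gp g (r₂ - r₂') = gp α d := by
    rw [gp_sub hq, gp_sub hq, hd, gp_sub hq, div_mul_div_comm, h₁, h₁',
      mul_div_mul_right_eq_div]
  have e2 : gp B (r₁ - r₁') * gp y (r₂ - r₂') * gp α (r₃ - r₃') = gp β d := by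
    rw [gp_sub hq, gp_sub hq, gp_sub hq, hd, gp_sub hq, div_mul_div_comm,
      div_mul_div_comm, h₂, h₂', mul_div_mul_right_eq_div]
  have e3 : gp g (r₃ - r₃') = gp yi (-d) := by
    have : (-d : ZMod q) = -c₁ - -c₂ := by ring
    rw [gp_sub hq, h₃, h₃', mul_div_mul_right_eq_div, this, gp_sub hq]
  refine ⟨?_, ?_, ?_⟩
  · have hxi' : xi = (r₃ - r₃') * (-d⁻¹) := by rw [hxi]; field_simp
    rw [hxi', gp_mul hq, e3, ← gp_mul hq]
    have : (-d) * (-d⁻¹) = (1 : ZMod q) := by field_simp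
    rw [this, gp_one hq]
  · refine gp_cancel hq hdne ?_
    rw [← gp_mul hq, mul_gp hq, ← gp_mul hq, hσrd, hrd]
    exact e1.symm
  · refine gp_cancel hq hdne ?_
    rw [mul_gp hq, ← gp_neg hq, ← gp_mul hq, ← gp_mul hq, hxid, mul_gp hq,
      ← gp_mul hq, hσrd, hrd]
    exact e2.symm
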